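/- Correctness of the unidirectional (top-down) labeling recursion: Let N be a network model with weights w : A → ℝ^K. Define label sets T(x) ⊆ ℝ^K for each node x by T(r) = {0} and, for any node x not equal to r, T(x) = ND(⋃_{a : arc with head x} (T(tail(a)) + {w(a)})), where S + {c} denotes {y + c : y ∈ S}. Then T(t) = P(N), the Pareto frontier of N. Moreover, for every node x, T(x) = ND({w(q) : q a directed path from r to x}). -/

import Mathlib

open Pointwise

/-- `y` dominates `y'`: componentwise at least as large and not equal. -/
def dominates {K : ℕ} (y y' : Fin K → ℝ) : Prop :=
  (∀ k, y' k ≤ y k) ∧ y ≠ y'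

/-- The nondominated subset of `S`. -/
def ND {K : ℕ} (S : Set (Fin K → ℝ)) : Set (Fin K → ℝ) :=
  {y ∈ S | ¬ ∃ y' ∈ S, dominates y' y}

/-- `IsPath tl hd p u v`: the list of arcs `p` forms a directed walk from `u` to `v`. -/
def IsPath {V A : Type*} (tl hd : A → V) : List A → V → V → Prop
  | [], u, v => u = v
  | a :: p, u, v => tl a = u ∧ IsPath tl hd p (hd a) v

/-- Total weight of a list of arcs. -/
def pathWeight {A : Type*} {K : ℕ} (w : A → Fin K → ℝ) (p : List A) : Fin K → ℝ :=
  (p.map w).sum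

/-- A layered-acyclic network model with `n + 1` layers (indexed `1, …, n+1`),
a single root in layer `1`, a single terminal in layer `n+1`, every arc going
from one layer to the next, and `K`-dimensional arc weights. -/
structure Network (V A : Type*) (K : ℕ) where
  tl : A → V
  hd : A → V
  w : A → Fin K → ℝ
  n : ℕ
  layer : V → ℕ
  layer_pos : ∀ v, 1 ≤ layer v
  layer_le : ∀ v, layer v ≤ n + 1
  arc_step : ∀ a, layer (hd a) = layer (tl a) + 1
  root : V
  terminal : V
  root_layer : layer root = 1
  terminal_layer : layer terminal = n + 1
  root_unique : ∀ v, layer v = 1 → v = root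
  terminal_unique : ∀ v, layer v = n + 1 → v = terminal
  layer_nonempty : ∀ j, 1 ≤ j → j ≤ n + 1 → ∃ v, layer v = j

namespace Network

variable {V A : Type*} {K : ℕ}

/-- The set of directed paths from `u` to `v`. -/
def Paths (N : Network V A K) (u v : V) : Set (List A) :=
  {p | IsPath N.tl N.hd p u v}

/-- The set of weights of directed paths from `u` to `v`. -/
def weights (N : Network V A K) (u v : V) : Set (Fin K → ℝ) :=
  pathWeight N.w '' N.Paths u v

/-- The Pareto frontier of the network. -/
def Pareto (N : Network V A K) : Set (Fin K → ℝ) :=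
  ND (N.weights N.root N.terminal)

end Network

section Aux

variable {K : ℕ}

lemma dominates_iff_lt (y y' : Fin K → ℝ) : dominates y' y ↔ y < y' := by
  constructor
  · rintro ⟨h1, h2⟩
    exact lt_iff_le_and_ne.2 ⟨fun k => h1 k, fun h => h2 h.symm⟩
  · intro h
    exact ⟨fun k => (le_of_lt h) k, (ne_of_lt h).symm⟩

lemma mem_ND_iff {S : Set (Fin K → ℝ)} {y : Fin K → ℝ} :
    y ∈ ND S ↔ y ∈ S ∧ ∀ z ∈ S, ¬ y < z := by
  unfold ND
  simp only [Set.mem_setOf_eq, dominates_iff_lt]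
  constructor
  · rintro ⟨h1, h2⟩; exact ⟨h1, fun z hz hlt => h2 ⟨z, hz, hlt⟩⟩
  · rintro ⟨h1, h2⟩; exact ⟨h1, fun ⟨z, hz, hlt⟩ => h2 z hz hlt⟩

lemma ND_subset (S : Set (Fin K → ℝ)) : ND S ⊆ S := fun _ h => h.1

lemma exists_ND_ge {S : Set (Fin K → ℝ)} (hS : S.Finite) {y : Fin K → ℝ} (hy : y ∈ S) :
    ∃ z ∈ ND S, y ≤ z := by
  obtain ⟨a, ⟨haS, hya⟩, hmax⟩ :=
    Set.Finite.exists_maximalFor id {z ∈ S | y ≤ z}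
      (hS.subset (fun z hz => hz.1)) ⟨y, hy, le_refl y⟩
  refine ⟨a, mem_ND_iff.2 ⟨haS, fun z hz hlt => ?_⟩, hya⟩
  have : a = z := le_antisymm hlt.le (hmax ⟨hz, hya.trans hlt.le⟩ hlt.le)
  exact absurd this (ne_of_lt hlt)

lemma ND_congr {S' S : Set (Fin K → ℝ)} (hsub : S' ⊆ S)
    (hcof : ∀ y ∈ S, ∃ z ∈ S', y ≤ z) : ND S' = ND S := by
  ext y
  simp only [mem_ND_iff]
  constructor
  · rintro ⟨hy, hmax⟩
    refine ⟨hsub hy, fun z hz hlt => ?_⟩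
    obtain ⟨z', hz', hzz'⟩ := hcof z hz
    exact hmax z' hz' (lt_of_lt_of_le hlt hzz')
  · rintro ⟨hy, hmax⟩
    obtain ⟨z, hz, hyz⟩ := hcof y hy
    rcases eq_or_lt_of_le hyz with rfl | hlt
    · exact ⟨hz, fun z hz hlt => hmax z (hsub hz) hlt⟩
    · exact absurd hlt (hmax z (hsub hz))

variable {V A : Type*}

lemma isPath_append_single (tl hd : A → V) (p : List A) (a : A) (u v : V) :
    IsPath tl hd (p ++ [a]) u v ↔ IsPath tl hd p u (tl a) ∧ hd a = v := by
  induction p generalizing u with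
  | nil =>
    simp only [List.nil_append, IsPath]
    tauto
  | cons b q ih => simp [IsPath, ih]; tauto

lemma pathWeight_append_single (w : A → Fin K → ℝ) (p : List A) (a : A) :
    pathWeight w (p ++ [a]) = pathWeight w p + w a := by
  simp [pathWeight]

namespace Network

lemma isPath_layer (N : Network V A K) :
    ∀ (p : List A) (u v : V), IsPath N.tl N.hd p u v → N.layer v = N.layer u + p.length := by
  intro p
  induction p with
  | nil => intro u v h; simp [IsPath] at h; simp [h]
  | cons a q ih =>
    rintro u v ⟨rfl, h⟩
    have := ih _ _ h
    have h2 := N.arc_step a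
    simp only [List.length_cons]
    omega

lemma weights_finite [Finite A] (N : Network V A K) (u v : V) : (N.weights u v).Finite := by
  apply Set.Finite.image
  apply (List.finite_length_le A (N.n + 1)).subset
  intro p hp
  have := N.isPath_layer p u v hp
  have h1 := N.layer_pos u
  have h2 := N.layer_le v
  simp only [Set.mem_setOf_eq]
  omega

lemma weights_root_self (N : Network V A K) : N.weights N.root N.root = {0} := by
  ext y
  constructor
  · rintro ⟨p, hp, rfl⟩
    have := N.isPath_layer p _ _ hp
    have hlen : p.length = 0 := by omega
    rw [List.length_eq_zero_iff] at hlen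
    subst hlen
    simp [pathWeight]
  · rintro rfl
    exact ⟨[], rfl, by simp [pathWeight]⟩

lemma weights_rec (N : Network V A K) (x : V) (hx : x ≠ N.root) :
    N.weights N.root x =
      ⋃ a ∈ {a : A | N.hd a = x}, (fun z => z + N.w a) '' N.weights N.root (N.tl a) := by
  ext y
  simp only [Set.mem_iUnion, Set.mem_setOf_eq, Set.mem_image, exists_prop]
  constructor
  · rintro ⟨p, hp, rfl⟩
    rcases List.eq_nil_or_concat p with rfl | ⟨q, a, rfl⟩
    · exact absurd hp.symm hx
    · simp only [List.concat_eq_append] at hp ⊢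
      rw [Network.Paths, Set.mem_setOf_eq, isPath_append_single] at hp
      exact ⟨a, hp.2, pathWeight N.w q, ⟨q, hp.1, rfl⟩, (pathWeight_append_single N.w q a).symm⟩
  · rintro ⟨a, ha, z, ⟨q, hq, rfl⟩, rfl⟩
    exact ⟨q ++ [a], (isPath_append_single _ _ q a _ _).2 ⟨hq, ha⟩,
      pathWeight_append_single N.w q a⟩

end Network

end Aux

/-- **Correctness of the unidirectional (top-down) labeling recursion.**  If the label
sets `T` satisfy `T(r) = {0}` and, for every node `x ≠ r`,
`T(x) = ND(⋃ over arcs a with head x of (T(tail a) + {w a}))`, then `T(t)` is the Pareto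
frontier of the network, and more generally `T(x) = ND({w(q) : q an r–x path})` for every
node `x`. -/
theorem top_down_labeling_correct {V A : Type*} [Fintype V] [Fintype A] {K : ℕ}
    (N : Network V A K) (T : V → Set (Fin K → ℝ))
    (hroot : T N.root = {0})
    (hrec : ∀ x : V, x ≠ N.root →
      T x = ND (⋃ a ∈ {a : A | N.hd a = x}, (fun z => z + N.w a) '' T (N.tl a))) :
    T N.terminal = N.Pareto ∧ ∀ x : V, T x = ND (N.weights N.root x) := by
  classical
  have key : ∀ m, ∀ x : V, N.layer x ≤ m → T x = ND (N.weights N.root x) := by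
    intro m
    induction m with
    | zero => intro x hx; exact absurd (N.layer_pos x) (by omega)
    | succ m ih =>
      intro x hx
      by_cases hxr : x = N.root
      · subst hxr
        rw [hroot, N.weights_root_self]
        ext y
        simp only [mem_ND_iff, Set.mem_singleton_iff]
        constructor
        · rintro rfl; exact ⟨rfl, by rintro z rfl hlt; exact lt_irrefl _ hlt⟩
        · exact fun h => h.1
      · rw [hrec x hxr, N.weights_rec x hxr]
        apply ND_congr
        · apply Set.iUnion₂_mono
          intro a ha
          apply Set.image_mono
          have htl : N.layer (N.tl a) ≤ m := by
            have := N.arc_step a; rw [ha] at this; omega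
          rw [ih (N.tl a) htl]
          exact ND_subset _
        · rintro y hy
          simp only [Set.mem_iUnion, Set.mem_setOf_eq, Set.mem_image, exists_prop] at hy ⊢
          obtain ⟨a, ha, z, hz, rfl⟩ := hy
          have htl : N.layer (N.tl a) ≤ m := by
            have := N.arc_step a; rw [ha] at this; omega
          obtain ⟨z', hz', hzz'⟩ := exists_ND_ge (N.weights_finite N.root (N.tl a)) hz
          rw [← ih (N.tl a) htl] at hz'
          exact ⟨z' + N.w a, ⟨a, ha, z', hz', rfl⟩, add_le_add_left hzz' _⟩
  have hall : ∀ x : V, T x = ND (N.weights N.root x) :=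
    fun x => key (N.layer x) x le_rfl
  exact ⟨(hall N.terminal).trans rfl, hall⟩
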